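/- Assume conditions (C1)–(C3) hold (with f̄_n ≠ 1 for all n), and let A : ℕ → ℕ be nondecreasing with A(n) → ∞ and n · f̄_{0,A(n)} → 1. Then for all reals 0 < ε ≤ m: lim_{n→∞} f̄_{0,A(⌊nm⌋)} / (1 − f_{0,A(⌊nε⌋)}(0)) = ((2+ν)/2) · (ε/m). Equivalently, the conditional expectation E[X_{A(⌊nm⌋)} | X_{A(⌊nε⌋)} > 0] converges to ((2+ν)/2)(ε/m). -/

import Mathlib

open Filter Finset
open Topology

set_option maxHeartbeats 1600000

structure PGF where
  p : ℕ → ℝ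
  nonneg : ∀ k, 0 ≤ p k
  hasSum_one : HasSum p 1

noncomputable def PGF.eval (f : PGF) (s : ℝ) : ℝ := ∑' k, f.p k * s ^ k

noncomputable def PGF.mean (f : PGF) : ℝ := ∑' k : ℕ, (k : ℝ) * f.p k

noncomputable def PGF.m2 (f : PGF) : ℝ := ∑' k : ℕ, (k : ℝ) * ((k : ℝ) - 1) * f.p k

noncomputable def PGF.m3 (f : PGF) : ℝ := ∑' k : ℕ, (k : ℝ) * ((k : ℝ) - 1) * ((k : ℝ) - 2) * f.p k

/-- `iterComp f j n s` is `f_{j,n}(s) = f_{j+1}(f_{j+2}(⋯ f_n(s)))`, with `f_{n,n}(s) = s`. -/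
noncomputable def iterComp (f : ℕ → PGF) (j n : ℕ) (s : ℝ) : ℝ :=
  (List.range' (j+1) (n-j)).foldr (fun k t => (f k).eval t) s

/-- pointwise polynomial bounds on `1 - t^k` -/
lemma pow_bounds {t : ℝ} (ht0 : 0 ≤ t) (ht1 : t ≤ 1) (k : ℕ) :
    (k : ℝ) * (1 - t) - ((k : ℝ) * ((k:ℝ) - 1) / 2) * (1 - t)^2 ≤ 1 - t^k ∧
    1 - t^k ≤ (k : ℝ) * (1 - t) ∧
    1 - t^k ≤ (k : ℝ) * (1 - t) - ((k : ℝ) * ((k:ℝ) - 1) / 2) * (1 - t)^2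
      + ((k:ℝ) * ((k:ℝ) - 1) * ((k:ℝ) - 2) / 6) * (1 - t)^3 := by
  induction k with
  | zero => norm_num
  | succ k ih =>
    obtain ⟨h1, h2, h3⟩ := ih
    have htk0 : (0:ℝ) ≤ t ^ k := pow_nonneg ht0 k
    have htk1 : t ^ k ≤ 1 := pow_le_one₀ ht0 ht1
    have hu0 : (0:ℝ) ≤ 1 - t := by linarith
    have hrec : t ^ (k+1) = t * t ^ k := by ring
    have hx1 := mul_le_mul_of_nonneg_left h1 hu0
    have hx2 := mul_le_mul_of_nonneg_left h2 hu0
    refine ⟨?_, ?_, ?_⟩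
    · push_cast
      nlinarith [h1, h2, hx2]
    · push_cast
      nlinarith [h2, hx2]
    · push_cast
      nlinarith [h3, hx1]

namespace PGF

lemma m2_nonneg (g : PGF) : 0 ≤ g.m2 := by
  refine tsum_nonneg fun k => ?_
  rcases Nat.eq_zero_or_pos k with h | h
  · simp [h]
  · have h1 : (1:ℝ) ≤ (k:ℝ) := by exact_mod_cast h
    have h0 : (0:ℝ) ≤ (k:ℝ) - 1 := by linarith
    exact mul_nonneg (mul_nonneg (by positivity) h0) (g.nonneg k)

lemma m3_nonneg (g : PGF) : 0 ≤ g.m3 := by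
  refine tsum_nonneg fun k => ?_
  rcases Nat.eq_zero_or_pos k with h | h
  · simp [h]
  · rcases Nat.lt_or_ge k 2 with h2 | h2
    · interval_cases k <;> simp
    · have h1 : (1:ℝ) ≤ (k:ℝ) := by exact_mod_cast h
      have h2' : (2:ℝ) ≤ (k:ℝ) := by exact_mod_cast h2
      have ha : (0:ℝ) ≤ (k:ℝ) - 1 := by linarith
      have hb : (0:ℝ) ≤ (k:ℝ) - 2 := by linarith
      exact mul_nonneg (mul_nonneg (mul_nonneg (by positivity) ha) hb) (g.nonneg k)

lemma exists_ge_one_pos (g : PGF) (hmean : 0 < g.mean) : ∃ K, 1 ≤ K ∧ 0 < g.p K := by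
  by_contra h
  push_neg at h
  have hz : (fun k : ℕ => (k:ℝ) * g.p k) = fun _ => (0:ℝ) := by
    funext k
    rcases Nat.eq_zero_or_pos k with hk | hk
    · simp [hk]
    · have := h k hk
      have := g.nonneg k
      have : g.p k = 0 := le_antisymm ‹g.p k ≤ 0› ‹0 ≤ g.p k›
      simp [this]
  rw [PGF.mean, hz, tsum_zero] at hmean
  exact lt_irrefl _ hmean

lemma p0_lt_one (g : PGF) (hmean : 0 < g.mean) : g.p 0 < 1 := by
  obtain ⟨K, hK1, hKpos⟩ := g.exists_ge_one_pos hmean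
  have hne : (0:ℕ) ≠ K := by omega
  have hsum : ∑ i ∈ ({0, K} : Finset ℕ), g.p i ≤ 1 :=
    sum_le_hasSum _ (fun i _ => g.nonneg i) g.hasSum_one
  rw [Finset.sum_pair hne] at hsum
  linarith

section EvalBounds

variable (g : PGF) {t : ℝ}

lemma summable_pow (ht0 : 0 ≤ t) (ht1 : t ≤ 1) : Summable (fun k => g.p k * t ^ k) := by
  refine Summable.of_nonneg_of_le (fun k => mul_nonneg (g.nonneg k) (pow_nonneg ht0 k))
    (fun k => ?_) g.hasSum_one.summable
  exact mul_le_of_le_one_right (g.nonneg k) (pow_le_one₀ ht0 ht1)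

lemma one_sub_eval (ht0 : 0 ≤ t) (ht1 : t ≤ 1) : 1 - g.eval t = ∑' k, (g.p k - g.p k * t ^ k) := by
  rw [Summable.tsum_sub g.hasSum_one.summable (g.summable_pow ht0 ht1), g.hasSum_one.tsum_eq, PGF.eval]

lemma eval_nonneg (ht0 : 0 ≤ t) : 0 ≤ g.eval t :=
  tsum_nonneg fun k => mul_nonneg (g.nonneg k) (pow_nonneg ht0 k)

lemma one_sub_eval_le (ht0 : 0 ≤ t) (ht1 : t ≤ 1) (hm1 : Summable (fun k : ℕ => (k : ℝ) * g.p k)) :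
    1 - g.eval t ≤ g.mean * (1 - t) := by
  rw [g.one_sub_eval ht0 ht1]
  have h := Summable.tsum_le_tsum (f := fun k => g.p k - g.p k * t ^ k)
    (g := fun k => ((k:ℝ) * g.p k) * (1 - t)) (fun k => ?_)
    ((g.hasSum_one.summable).sub (g.summable_pow ht0 ht1)) (hm1.mul_right _)
  · rw [tsum_mul_right] at h
    exact h
  · have hb := (pow_bounds ht0 ht1 k).2.1
    nlinarith [mul_le_mul_of_nonneg_left hb (g.nonneg k)]

lemma one_sub_eval_ge (ht0 : 0 ≤ t) (ht1 : t ≤ 1) (hm1 : Summable (fun k : ℕ => (k : ℝ) * g.p k))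
    (hm2 : Summable (fun k : ℕ => (k : ℝ) * ((k : ℝ) - 1) * g.p k)) :
    g.mean * (1 - t) - g.m2 / 2 * (1 - t)^2 ≤ 1 - g.eval t := by
  rw [g.one_sub_eval ht0 ht1]
  have h := Summable.tsum_le_tsum
    (f := fun k : ℕ => ((k:ℝ) * g.p k) * (1 - t) - ((k:ℝ) * ((k:ℝ)-1) * g.p k) * ((1 - t)^2 / 2))
    (g := fun k => g.p k - g.p k * t ^ k) (fun k => ?_)
    ((hm1.mul_right _).sub (hm2.mul_right _))
    ((g.hasSum_one.summable).sub (g.summable_pow ht0 ht1))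
  · rw [Summable.tsum_sub (hm1.mul_right _) (hm2.mul_right _), tsum_mul_right, tsum_mul_right] at h
    rw [PGF.mean, PGF.m2] at *
    nlinarith [h]
  · have hb := (pow_bounds ht0 ht1 k).1
    nlinarith [mul_le_mul_of_nonneg_left hb (g.nonneg k)]

lemma one_sub_eval_le3 (ht0 : 0 ≤ t) (ht1 : t ≤ 1) (hm1 : Summable (fun k : ℕ => (k : ℝ) * g.p k))
    (hm2 : Summable (fun k : ℕ => (k : ℝ) * ((k : ℝ) - 1) * g.p k))
    (hm3 : Summable (fun k : ℕ => (k : ℝ) * ((k : ℝ) - 1) * ((k:ℝ) - 2) * g.p k)) :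
    1 - g.eval t ≤ g.mean * (1 - t) - g.m2 / 2 * (1 - t)^2 + g.m3 / 6 * (1 - t)^3 := by
  rw [g.one_sub_eval ht0 ht1]
  have h := Summable.tsum_le_tsum
    (f := fun k => g.p k - g.p k * t ^ k)
    (g := fun k : ℕ => ((k:ℝ) * g.p k) * (1 - t) - ((k:ℝ) * ((k:ℝ)-1) * g.p k) * ((1 - t)^2 / 2)
      + ((k:ℝ) * ((k:ℝ)-1) * ((k:ℝ)-2) * g.p k) * ((1 - t)^3 / 6))
    (fun k => ?_)
    ((g.hasSum_one.summable).sub (g.summable_pow ht0 ht1))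
    (((hm1.mul_right _).sub (hm2.mul_right _)).add (hm3.mul_right _))
  · rw [Summable.tsum_add ((hm1.mul_right _).sub (hm2.mul_right _)) (hm3.mul_right _),
      Summable.tsum_sub (hm1.mul_right _) (hm2.mul_right _), tsum_mul_right, tsum_mul_right,
      tsum_mul_right] at h
    rw [PGF.mean, PGF.m2, PGF.m3] at *
    nlinarith [h]
  · have hb := (pow_bounds ht0 ht1 k).2.2
    nlinarith [mul_le_mul_of_nonneg_left hb (g.nonneg k)]

lemma one_sub_eval_ge_p0 (ht0 : 0 ≤ t) (ht1 : t ≤ 1) : (1 - g.p 0) * (1 - t) ≤ 1 - g.eval t := by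
  rw [g.one_sub_eval ht0 ht1]
  have hsummand : Summable (fun k : ℕ => (if k = 0 then 0 else g.p k) * (1 - t)) := by
    refine Summable.mul_right _ ?_
    refine Summable.of_nonneg_of_le (fun k => ?_) (fun k => ?_) g.hasSum_one.summable
    · split <;> simp [g.nonneg]
    · split <;> simp [g.nonneg]
  have h := Summable.tsum_le_tsum
    (f := fun k : ℕ => (if k = 0 then 0 else g.p k) * (1 - t))
    (g := fun k => g.p k - g.p k * t ^ k) (fun k => ?_)
    hsummand ((g.hasSum_one.summable).sub (g.summable_pow ht0 ht1))
  · rw [tsum_mul_right] at h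
    have hps : ∑' (k:ℕ), (if k = 0 then 0 else g.p k) = 1 - g.p 0 := by
      have := Summable.tsum_eq_add_tsum_ite g.hasSum_one.summable 0
      rw [g.hasSum_one.tsum_eq] at this
      linarith
    rw [hps] at h
    exact h
  · rcases Nat.eq_zero_or_pos k with hk | hk
    · simp [hk]
    · have hk' : k ≠ 0 := by omega
      simp only [hk', if_false]
      have htk : t ^ k ≤ t := by
        calc t ^ k ≤ t ^ 1 := pow_le_pow_of_le_one ht0 ht1 hk
        _ = t := pow_one t
      nlinarith [g.nonneg k]

end EvalBounds

end PGF

noncomputable def phi (g : PGF) (t : ℝ) : ℝ := 1 / (1 - PGF.eval g t) - 1 / (g.mean * (1 - t))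

namespace PGF

section PhiBounds

variable (g : PGF) {t : ℝ}

lemma one_sub_eval_pos (hmean : 0 < g.mean) (ht0 : 0 ≤ t) (ht1 : t < 1) : 0 < 1 - g.eval t := by
  have h0 := g.p0_lt_one hmean
  have h := g.one_sub_eval_ge_p0 ht0 ht1.le
  nlinarith

lemma eval_lt_one (hmean : 0 < g.mean) (ht0 : 0 ≤ t) (ht1 : t < 1) : g.eval t < 1 := by
  have := g.one_sub_eval_pos hmean ht0 ht1
  linarith

lemma phi_nonneg (hmean : 0 < g.mean) (ht0 : 0 ≤ t) (ht1 : t < 1) (hm1 : Summable (fun k : ℕ => (k : ℝ) * g.p k)) : 0 ≤ phi g t := by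
  have hD := g.one_sub_eval_pos hmean ht0 ht1
  have hle := g.one_sub_eval_le ht0 ht1.le hm1
  have h := one_div_le_one_div_of_le hD hle
  unfold phi
  linarith

lemma phi_eq (hmean : 0 < g.mean) (ht0 : 0 ≤ t) (ht1 : t < 1) : phi g t
    = (g.mean * (1 - t) - (1 - g.eval t)) / ((1 - g.eval t) * (g.mean * (1 - t))) := by
  have hD := g.one_sub_eval_pos hmean ht0 ht1
  have hu : (0:ℝ) < 1 - t := by linarith
  have h1 : (1 - g.eval t) ≠ 0 := ne_of_gt hD
  have h2 : g.mean ≠ 0 := ne_of_gt hmean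
  have h3 : (1 - t) ≠ 0 := ne_of_gt hu
  unfold phi
  field_simp
  all_goals ring

lemma phi_le_crude (hmean : 0 < g.mean) (ht0 : 0 ≤ t) (ht1 : t < 1) (hm1 : Summable (fun k : ℕ => (k : ℝ) * g.p k)) (hm2 : Summable (fun k : ℕ => (k : ℝ) * ((k : ℝ) - 1) * g.p k)) : phi g t ≤ g.m2 / (2 * (1 - g.p 0) * g.mean) := by
  have hD := g.one_sub_eval_pos hmean ht0 ht1
  have hu : (0:ℝ) < 1 - t := by linarith
  have hp0 := g.p0_lt_one hmean
  have hN : g.mean * (1 - t) - (1 - g.eval t) ≤ g.m2 / 2 * (1 - t)^2 := by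
    have := g.one_sub_eval_ge ht0 ht1.le hm1 hm2
    linarith
  have hDlb := g.one_sub_eval_ge_p0 ht0 ht1.le
  have hm2n := g.m2_nonneg
  have hq : (0:ℝ) < 1 - g.p 0 := by linarith
  rw [g.phi_eq hmean ht0 ht1]
  have hdpos : (0:ℝ) < ((1 - g.p 0) * (1 - t)) * (g.mean * (1 - t)) :=
    mul_pos (mul_pos hq hu) (mul_pos hmean hu)
  have hstep : (g.mean * (1 - t) - (1 - g.eval t)) / ((1 - g.eval t) * (g.mean * (1 - t)))
      ≤ (g.m2 / 2 * (1 - t)^2) / (((1 - g.p 0) * (1 - t)) * (g.mean * (1 - t))) := by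
    refine div_le_div₀ (mul_nonneg (by linarith) (sq_nonneg _)) hN hdpos ?_
    have : (0:ℝ) < g.mean * (1 - t) := mul_pos hmean hu
    nlinarith
  refine hstep.trans (le_of_eq ?_)
  have hd2 : (0:ℝ) < 2 * (1 - g.p 0) * g.mean := by positivity
  rw [div_eq_div_iff (ne_of_gt hdpos) (ne_of_gt hd2)]
  ring

lemma phi_le_sharp (hmean : 0 < g.mean) (ht0 : 0 ≤ t) (ht1 : t < 1) (hm1 : Summable (fun k : ℕ => (k : ℝ) * g.p k)) (hm2 : Summable (fun k : ℕ => (k : ℝ) * ((k : ℝ) - 1) * g.p k)) (hlt : g.m2 / 2 < g.mean) :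
    phi g t ≤ (g.m2 / 2) / (g.mean * (g.mean - g.m2 / 2)) := by
  have hD := g.one_sub_eval_pos hmean ht0 ht1
  have hu : (0:ℝ) < 1 - t := by linarith
  have hm2n := g.m2_nonneg
  have hN : g.mean * (1 - t) - (1 - g.eval t) ≤ g.m2 / 2 * (1 - t)^2 := by
    have := g.one_sub_eval_ge ht0 ht1.le hm1 hm2
    linarith
  have hDlb : (g.mean - g.m2 / 2) * (1 - t) ≤ 1 - g.eval t := by
    have h := g.one_sub_eval_ge ht0 ht1.le hm1 hm2
    have key : 0 ≤ g.m2 * ((1 - t) * t) := mul_nonneg hm2n (by positivity)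
    nlinarith [h, key]
  rw [g.phi_eq hmean ht0 ht1]
  have hdpos : (0:ℝ) < ((g.mean - g.m2 / 2) * (1 - t)) * (g.mean * (1 - t)) := by
    have : (0:ℝ) < g.mean - g.m2 / 2 := by linarith
    positivity
  have hstep : (g.mean * (1 - t) - (1 - g.eval t)) / ((1 - g.eval t) * (g.mean * (1 - t)))
      ≤ (g.m2 / 2 * (1 - t)^2) / (((g.mean - g.m2 / 2) * (1 - t)) * (g.mean * (1 - t))) := by
    refine div_le_div₀ (by positivity) hN hdpos ?_
    have hpos : (0:ℝ) < g.mean * (1 - t) := by positivity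
    nlinarith
  refine hstep.trans (le_of_eq ?_)
  have hd2 : (0:ℝ) < g.mean * (g.mean - g.m2 / 2) := mul_pos hmean (by linarith)
  rw [div_eq_div_iff (ne_of_gt hdpos) (ne_of_gt hd2)]
  ring

lemma phi_ge (hmean : 0 < g.mean) (ht0 : 0 ≤ t) (ht1 : t < 1) (hm1 : Summable (fun k : ℕ => (k : ℝ) * g.p k)) (hm2 : Summable (fun k : ℕ => (k : ℝ) * ((k : ℝ) - 1) * g.p k)) (hm3 : Summable (fun k : ℕ => (k : ℝ) * ((k : ℝ) - 1) * ((k:ℝ) - 2) * g.p k)) : (g.m2 / 2 - g.m3 / 6) / g.mean ^ 2 ≤ phi g t := by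
  have hD := g.one_sub_eval_pos hmean ht0 ht1
  have hu : (0:ℝ) < 1 - t := by linarith
  have hm2n := g.m2_nonneg
  have hm3n := g.m3_nonneg
  by_cases hc : g.m2 / 2 - g.m3 / 6 ≤ 0
  · have hφ := g.phi_nonneg hmean ht0 ht1 hm1
    have : (g.m2 / 2 - g.m3 / 6) / g.mean ^ 2 ≤ 0 := by
      apply div_nonpos_of_nonpos_of_nonneg hc (by positivity)
    linarith
  · push_neg at hc
    have hN : g.m2 / 2 * (1 - t)^2 - g.m3 / 6 * (1 - t)^3
        ≤ g.mean * (1 - t) - (1 - g.eval t) := by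
      have := g.one_sub_eval_le3 ht0 ht1.le hm1 hm2 hm3
      linarith
    have hDub := g.one_sub_eval_le ht0 ht1.le hm1
    rw [g.phi_eq hmean ht0 ht1]
    have hc' : 0 ≤ g.m2 / 2 * (1 - t)^2 - g.m3 / 6 * (1 - t)^3 := by
      nlinarith [mul_nonneg hm3n (mul_nonneg (sq_nonneg (1 - t)) ht0),
        mul_pos (pow_pos hu 2) hc]
    have hstep : (g.m2 / 2 * (1 - t)^2 - g.m3 / 6 * (1 - t)^3) / ((g.mean * (1 - t)) * (g.mean * (1 - t)))
        ≤ (g.mean * (1 - t) - (1 - g.eval t)) / ((1 - g.eval t) * (g.mean * (1 - t))) := by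
      refine div_le_div₀ (by nlinarith) hN (by positivity) ?_
      have : (0:ℝ) < g.mean * (1 - t) := by positivity
      nlinarith
    refine le_trans ?_ hstep
    have heq : (g.m2 / 2 * (1 - t)^2 - g.m3 / 6 * (1 - t)^3) / ((g.mean * (1 - t)) * (g.mean * (1 - t)))
        = (g.m2 / 2 - g.m3 / 6 * (1 - t)) / g.mean ^ 2 := by
      have h2 : g.mean ≠ 0 := ne_of_gt hmean
      have h3 : (1 - t) ≠ 0 := ne_of_gt hu
      field_simp
    rw [heq]
    apply div_le_div_of_nonneg_right ?_ (by positivity) |>.trans (le_of_eq rfl)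
    · nlinarith
  
end PhiBounds

end PGF

lemma iterComp_self (f : ℕ → PGF) (n : ℕ) (s : ℝ) : iterComp f n n s = s := by
  simp [iterComp]

lemma iterComp_step (f : ℕ → PGF) {j n : ℕ} (h : j < n) (s : ℝ) :
    iterComp f j n s = (f (j+1)).eval (iterComp f (j+1) n s) := by
  unfold iterComp
  have hd : n - j = (n - (j+1)) + 1 := by omega
  rw [hd, List.range'_succ]
  simp only [List.foldr_cons]

noncomputable def Pp (f : ℕ → PGF) (n : ℕ) : ℝ := ∏ j ∈ Finset.Ioc 0 n, (f j).mean

noncomputable def Wt (f : ℕ → PGF) (k n : ℕ) : ℝ := ∏ i ∈ Finset.Ioc k n, (f i).mean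

section Seq

variable (f : ℕ → PGF)

lemma Pp_pos (hpos : ∀ n, 0 < (f n).mean) (n : ℕ) : 0 < Pp f n :=
  Finset.prod_pos fun i _ => hpos i

lemma Wt_pos (hpos : ∀ n, 0 < (f n).mean) (k n : ℕ) : 0 < Wt f k n :=
  Finset.prod_pos fun i _ => hpos i

lemma Pp_mul_Wt {k n : ℕ} (h : k ≤ n) : Pp f k * Wt f k n = Pp f n :=
  Finset.prod_Ioc_consecutive _ (Nat.zero_le k) h

lemma iter_Ico (hpos : ∀ n, 0 < (f n).mean) :
    ∀ d j n : ℕ, j + d = n → 0 ≤ iterComp f j n 0 ∧ iterComp f j n 0 < 1 := by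
  intro d
  induction d with
  | zero =>
    intro j n h
    subst h
    simp [Nat.add_zero, iterComp_self]
  | succ d ih =>
    intro j n h
    have hjn : j < n := by omega
    obtain ⟨hr0, hr1⟩ := ih (j+1) n (by omega)
    rw [iterComp_step f hjn]
    exact ⟨(f (j+1)).eval_nonneg hr0,
      (f (j+1)).eval_lt_one (hpos _) hr0 hr1⟩

lemma iter_lt_one (hpos : ∀ n, 0 < (f n).mean) (j n : ℕ) (h : j ≤ n) :
    0 ≤ iterComp f j n 0 ∧ iterComp f j n 0 < 1 :=
  iter_Ico f hpos (n - j) j n (by omega)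

lemma iter_identity (hpos : ∀ n, 0 < (f n).mean) :
    ∀ d j n : ℕ, j + d = n →
      (∏ i ∈ Finset.Ioc j n, (f i).mean) / (1 - iterComp f j n 0)
        = 1 + ∑ k ∈ Finset.Ioc j n,
            ((f k).mean * Wt f k n) * phi (f k) (iterComp f k n 0) := by
  intro d
  induction d with
  | zero =>
    intro j n h
    subst h
    simp [Nat.add_zero, iterComp_self]
  | succ d ih =>
    intro j n h
    have hjn : j < n := by omega
    have hj1 : j + 1 ≤ n := hjn
    obtain ⟨hr0, hr1⟩ := iter_Ico f hpos d (j+1) n (by omega)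
    set r : ℝ := iterComp f (j+1) n 0 with hrdef
    set Pi' : ℝ := Wt f (j+1) n with hPidef
    have hD : 0 < 1 - (f (j+1)).eval r := (f (j+1)).one_sub_eval_pos (hpos _) hr0 hr1
    have hr1' : (0:ℝ) < 1 - r := by linarith
    have hm : 0 < (f (j+1)).mean := hpos _
    have IH' : Pi' / (1 - r) = 1 + ∑ k ∈ Finset.Ioc (j+1) n,
        ((f k).mean * Wt f k n) * phi (f k) (iterComp f k n 0) := ih (j+1) n (by omega)
    have hprod : (∏ i ∈ Finset.Ioc j n, (f i).mean) = (f (j+1)).mean * Pi' := by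
      rw [hPidef, Wt, ← Finset.prod_Ioc_consecutive _ (Nat.le_succ j) hj1,
        Nat.Ioc_succ_singleton, Finset.prod_singleton]
    have hsum : ∑ k ∈ Finset.Ioc j n, ((f k).mean * Wt f k n) * phi (f k) (iterComp f k n 0)
        = ((f (j+1)).mean * Pi') * phi (f (j+1)) r
          + ∑ k ∈ Finset.Ioc (j+1) n, ((f k).mean * Wt f k n) * phi (f k) (iterComp f k n 0) := by
      rw [← Finset.sum_Ioc_consecutive _ (Nat.le_succ j) hj1,
        Nat.Ioc_succ_singleton, Finset.sum_singleton]
    have e1 : ((f (j+1)).mean * Pi') / (1 - (f (j+1)).eval r)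
        = Pi' / (1 - r) + ((f (j+1)).mean * Pi') * phi (f (j+1)) r := by
      unfold phi
      field_simp
      ring
    rw [iterComp_step f hjn, hprod, hsum, ← hrdef, e1, IH']
    ring

lemma tele (hpos : ∀ n, 0 < (f n).mean) (n : ℕ) :
    ∑ k ∈ Finset.Ioc 0 n, Wt f k n * (1 - (f k).mean) = 1 - Pp f n := by
  induction n with
  | zero => simp [Pp]
  | succ n ih =>
    rw [Finset.sum_Ioc_succ_top (Nat.zero_le _)]
    have hw : ∀ k ∈ Finset.Ioc 0 n,
        Wt f k (n+1) * (1 - (f k).mean) = (Wt f k n * (1 - (f k).mean)) * (f (n+1)).mean := by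
      intro k hk
      have hk' : k ≤ n := (Finset.mem_Ioc.mp hk).2
      rw [Wt, Wt, Finset.prod_Ioc_succ_top hk']
      ring
    rw [Finset.sum_congr rfl hw, ← Finset.sum_mul, ih]
    have h1 : Wt f (n+1) (n+1) = 1 := by simp [Wt]
    have h2 : Pp f (n+1) = Pp f n * (f (n+1)).mean := by
      rw [Pp, Pp, Finset.prod_Ioc_succ_top (Nat.zero_le _)]
    rw [h1, h2]
    ring

lemma sum_Ioc_zero_eq (g : ℕ → ℝ) (n : ℕ) :
    ∑ j ∈ Finset.range (n+1), g j = g 0 + ∑ j ∈ Finset.Ioc 0 n, g j := by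
  rw [Finset.range_eq_Ico, Finset.Ico_add_one_right_eq_Icc, Finset.Icc_eq_cons_Ioc (Nat.zero_le n),
    Finset.sum_cons]

lemma Pp_tendsto_zero (hpos : ∀ n, 0 < (f n).mean)
    (hC1b : ¬ Summable (fun n => max (1 - (f n).mean) 0))
    (hC1c : Summable (fun n => max ((f n).mean - 1) 0)) :
    Tendsto (Pp f) atTop (𝓝 0) := by
  set Sp := ∑' n, max ((f n).mean - 1) 0 with hSp
  have hg0 : ∀ n:ℕ, (0:ℝ) ≤ max (1 - (f n).mean) 0 := fun n => le_max_right _ _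
  have hB : Tendsto (fun n => ∑ j ∈ Finset.range n, max (1 - (f j).mean) 0) atTop atTop :=
    (not_summable_iff_tendsto_nat_atTop_of_nonneg hg0).mp hC1b
  have hub : ∀ n, Pp f n ≤ Real.exp (Sp + max (1 - (f 0).mean) 0
      - ∑ j ∈ Finset.range (n+1), max (1 - (f j).mean) 0) := by
    intro n
    have hexp : Pp f n = Real.exp (∑ j ∈ Finset.Ioc 0 n, Real.log (f j).mean) := by
      rw [Real.exp_sum, Pp]
      exact (Finset.prod_congr rfl fun j _ => (Real.exp_log (hpos j)).symm)
    rw [hexp]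
    apply Real.exp_le_exp.mpr
    have hlog : ∀ j ∈ Finset.Ioc 0 n, Real.log (f j).mean
        ≤ max ((f j).mean - 1) 0 - max (1 - (f j).mean) 0 := by
      intro j _
      have h1 : Real.log (f j).mean ≤ (f j).mean - 1 :=
        Real.log_le_sub_one_of_pos (hpos j)
      have h2 : (f j).mean - 1 = max ((f j).mean - 1) 0 - max (1 - (f j).mean) 0 := by
        rcases le_total ((f j).mean) 1 with h | h
        · rw [max_eq_right (by linarith : (f j).mean - 1 ≤ 0),
            max_eq_left (by linarith : (0:ℝ) ≤ 1 - (f j).mean)]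
          ring
        · rw [max_eq_left (by linarith : (0:ℝ) ≤ (f j).mean - 1),
            max_eq_right (by linarith : 1 - (f j).mean ≤ 0)]
          ring
      linarith
    calc ∑ j ∈ Finset.Ioc 0 n, Real.log (f j).mean
        ≤ ∑ j ∈ Finset.Ioc 0 n, (max ((f j).mean - 1) 0 - max (1 - (f j).mean) 0) :=
          Finset.sum_le_sum hlog
      _ = ∑ j ∈ Finset.Ioc 0 n, max ((f j).mean - 1) 0
          - ∑ j ∈ Finset.Ioc 0 n, max (1 - (f j).mean) 0 :=
          Finset.sum_sub_distrib _ _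
      _ ≤ Sp + max (1 - (f 0).mean) 0 - ∑ j ∈ Finset.range (n+1), max (1 - (f j).mean) 0 := by
          have h3 : ∑ j ∈ Finset.Ioc 0 n, max ((f j).mean - 1) 0 ≤ Sp :=
            Summable.sum_le_tsum _ (fun i _ => le_max_right _ _) hC1c
          have h4 := sum_Ioc_zero_eq (fun j => max (1 - (f j).mean) 0) n
          linarith
  have hconv : Tendsto (fun n => Real.exp (Sp + max (1 - (f 0).mean) 0
      - ∑ j ∈ Finset.range (n+1), max (1 - (f j).mean) 0)) atTop (𝓝 0) := by
    apply Real.tendsto_exp_atBot.comp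
    have hB' : Tendsto (fun n => ∑ j ∈ Finset.range (n+1), max (1 - (f j).mean) 0)
        atTop atTop := hB.comp (tendsto_add_atTop_nat 1)
    have h5 := tendsto_neg_atTop_atBot.comp hB'
    have h6 := tendsto_atBot_add_const_left atTop (Sp + max (1 - (f 0).mean) 0) h5
    refine h6.congr fun n => ?_
    simp only [Function.comp_apply]
    ring
  exact squeeze_zero (fun n => (Pp_pos f hpos n).le) hub hconv

lemma exists_ub_fin (g : ℕ → ℝ) : ∀ K : ℕ, ∃ C, ∀ k < K, g k ≤ C := by
  intro K
  induction K with
  | zero => exact ⟨0, by omega⟩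
  | succ K ih =>
    obtain ⟨C, hC⟩ := ih
    refine ⟨max C (g K), fun k hk => ?_⟩
    rcases Nat.lt_or_ge k K with h | h
    · exact (hC k h).trans (le_max_left _ _)
    · have : k = K := by omega
      subst this
      exact le_max_right _ _

lemma exists_lb_pos_fin (g : ℕ → ℝ) (h : ∀ k, 0 < g k) :
    ∀ K : ℕ, ∃ C > 0, ∀ k < K, C ≤ g k := by
  intro K
  induction K with
  | zero => exact ⟨1, one_pos, by omega⟩
  | succ K ih =>
    obtain ⟨C, hCpos, hC⟩ := ih
    refine ⟨min C (g K), lt_min hCpos (h K), fun k hk => ?_⟩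
    rcases Nat.lt_or_ge k K with h' | h'
    · exact (min_le_left _ _).trans (hC k h')
    · have : k = K := by omega
      subst this
      exact min_le_right _ _

lemma mean_lb (hpos : ∀ n, 0 < (f n).mean)
    (hC1a : Tendsto (fun n => (f n).mean) atTop (𝓝 1)) :
    ∃ μ > 0, ∀ k, μ ≤ (f k).mean := by
  obtain ⟨K, hK⟩ := (hC1a.eventually (eventually_gt_nhds (by norm_num : (1:ℝ)/2 < 1))).exists_forall_of_atTop
  obtain ⟨C, hCpos, hC⟩ := exists_lb_pos_fin (fun k => (f k).mean) hpos K
  refine ⟨min C (1/2), lt_min hCpos (by norm_num), fun k => ?_⟩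
  rcases Nat.lt_or_ge k K with h | h
  · exact (min_le_left _ _).trans (hC k h)
  · exact (min_le_right _ _).trans (hK k h).le

lemma mean_ub (hC1a : Tendsto (fun n => (f n).mean) atTop (𝓝 1)) :
    ∃ F, 1 ≤ F ∧ ∀ k, (f k).mean ≤ F := by
  obtain ⟨K, hK⟩ := (hC1a.eventually (eventually_lt_nhds (by norm_num : (1:ℝ) < 2))).exists_forall_of_atTop
  obtain ⟨C, hC⟩ := exists_ub_fin (fun k => (f k).mean) K
  refine ⟨max (max C 2) 1, le_max_right _ _, fun k => ?_⟩
  rcases Nat.lt_or_ge k K with h | h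
  · exact ((hC k h).trans (le_max_left _ _)).trans (le_max_left _ _)
  · exact (((hK k h).le).trans (le_max_right C 2)).trans (le_max_left _ _)

lemma Sp_nonneg : 0 ≤ ∑' n, max ((f n).mean - 1) 0 :=
  tsum_nonneg fun n => le_max_right _ _

lemma Wt_le_Kw (hpos : ∀ n, 0 < (f n).mean)
    (hC1c : Summable (fun n => max ((f n).mean - 1) 0)) (k n : ℕ) :
    Wt f k n ≤ Real.exp (∑' j, max ((f j).mean - 1) 0) := by
  calc Wt f k n ≤ ∏ i ∈ Finset.Ioc k n, Real.exp (max ((f i).mean - 1) 0) := by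
        refine Finset.prod_le_prod (fun i _ => (hpos i).le) (fun i _ => ?_)
        calc (f i).mean = ((f i).mean - 1) + 1 := by ring
          _ ≤ Real.exp ((f i).mean - 1) := Real.add_one_le_exp _
          _ ≤ Real.exp (max ((f i).mean - 1) 0) := Real.exp_le_exp.mpr (le_max_left _ _)
    _ = Real.exp (∑ i ∈ Finset.Ioc k n, max ((f i).mean - 1) 0) := (Real.exp_sum _ _).symm
    _ ≤ Real.exp (∑' j, max ((f j).mean - 1) 0) :=
        Real.exp_le_exp.mpr (Summable.sum_le_tsum _ (fun i _ => le_max_right _ _) hC1c)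

lemma MS_bound (hpos : ∀ n, 0 < (f n).mean)
    (hC1c : Summable (fun n => max ((f n).mean - 1) 0)) (n : ℕ) :
    ∑ k ∈ (Finset.Ioc 0 n).filter (fun k => (f k).mean < 1), Wt f k n * (1 - (f k).mean)
      ≤ 1 + Real.exp (∑' j, max ((f j).mean - 1) 0) * (∑' j, max ((f j).mean - 1) 0) := by
  set Sp := ∑' j, max ((f j).mean - 1) 0 with hSp
  have hsplit := Finset.sum_filter_add_sum_filter_not (Finset.Ioc 0 n)
    (fun k => (f k).mean < 1) (fun k => Wt f k n * (1 - (f k).mean))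
  rw [tele f hpos n] at hsplit
  have hB : -(Real.exp Sp * Sp)
      ≤ ∑ k ∈ (Finset.Ioc 0 n).filter (fun k => ¬ (f k).mean < 1), Wt f k n * (1 - (f k).mean) := by
    have h1 : ∀ k ∈ (Finset.Ioc 0 n).filter (fun k => ¬ (f k).mean < 1),
        -(Real.exp Sp * max ((f k).mean - 1) 0) ≤ Wt f k n * (1 - (f k).mean) := by
      intro k hk
      have hk1 : ¬ (f k).mean < 1 := (Finset.mem_filter.mp hk).2
      push_neg at hk1
      have hw1 := Wt_le_Kw f hpos hC1c k n
      have hw0 := (Wt_pos f hpos k n).le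
      have hmax : max ((f k).mean - 1) 0 = (f k).mean - 1 := max_eq_left (by linarith)
      rw [hmax]
      have h2 : Wt f k n * ((f k).mean - 1) ≤ Real.exp Sp * ((f k).mean - 1) :=
        mul_le_mul_of_nonneg_right hw1 (by linarith)
      nlinarith
    have hsum_le : ∑ k ∈ (Finset.Ioc 0 n).filter (fun k => ¬ (f k).mean < 1),
        max ((f k).mean - 1) 0 ≤ Sp :=
      Summable.sum_le_tsum _ (fun i _ => le_max_right _ _) hC1c
    have hexp : (0:ℝ) < Real.exp Sp := Real.exp_pos _
    calc -(Real.exp Sp * Sp)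
        ≤ -(Real.exp Sp * ∑ k ∈ (Finset.Ioc 0 n).filter (fun k => ¬ (f k).mean < 1),
            max ((f k).mean - 1) 0) := by nlinarith
      _ = ∑ k ∈ (Finset.Ioc 0 n).filter (fun k => ¬ (f k).mean < 1),
            -(Real.exp Sp * max ((f k).mean - 1) 0) := by
          rw [Finset.mul_sum, ← Finset.sum_neg_distrib]
      _ ≤ _ := Finset.sum_le_sum h1
  have hPp := Pp_pos f hpos n
  nlinarith [hB, hsplit]

lemma tail_small (g : ℕ → ℝ) (hg : Summable g) (hg0 : ∀ k, 0 ≤ g k) {δ : ℝ} (hδ : 0 < δ) :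
    ∃ K : ℕ, ∀ T : Finset ℕ, (∀ k ∈ T, K ≤ k) → ∑ k ∈ T, g k ≤ δ := by
  have htt : Tendsto (fun n => ∑ j ∈ Finset.range n, g j) atTop (𝓝 (∑' j, g j)) :=
    hg.hasSum.tendsto_sum_nat
  have hev : ∀ᶠ n in atTop, (∑' j, g j) - δ < ∑ j ∈ Finset.range n, g j :=
    htt.eventually (eventually_gt_nhds (by linarith))
  obtain ⟨K, hK⟩ := hev.exists_forall_of_atTop
  refine ⟨K, fun T hT => ?_⟩
  have hdisj : Disjoint (Finset.range K) T := by
    rw [Finset.disjoint_left]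
    intro k hk hkT
    exact absurd (hT k hkT) (by simpa using hk)
  have hun : ∑ k ∈ Finset.range K ∪ T, g k ≤ ∑' j, g j :=
    Summable.sum_le_tsum _ (fun i _ => hg0 i) hg
  rw [Finset.sum_union hdisj] at hun
  have := hK K le_rfl
  linarith

end Seq

section Limits

variable (f : ℕ → PGF)

lemma van (hpos : ∀ n, 0 < (f n).mean) (hne : ∀ n, (f n).mean ≠ 1)
    (hC1a : Tendsto (fun n => (f n).mean) atTop (𝓝 1))
    (hC1b : ¬ Summable (fun n => max (1 - (f n).mean) 0))
    (hC1c : Summable (fun n => max ((f n).mean - 1) 0))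
    (e : ℕ → ℝ) (C : ℝ)
    (hbd : ∀ k, |e k| ≤ C * |1 - (f k).mean|)
    (hsm : ∀ δ : ℝ, 0 < δ → ∃ K, ∀ k, K ≤ k → (f k).mean < 1 → |e k| ≤ δ * (1 - (f k).mean)) :
    Tendsto (fun n => ∑ k ∈ Finset.Ioc 0 n, ((f k).mean * Wt f k n) * e k) atTop (𝓝 0) := by
  have hC0 : 0 ≤ C := by
    have h1 := hbd 0
    have h2 : 0 < |1 - (f 0).mean| := abs_pos.mpr (sub_ne_zero.mpr (Ne.symm (hne 0)))
    nlinarith [abs_nonneg (e 0)]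
  obtain ⟨F, hF1, hFub⟩ := mean_ub f hC1a
  have hF0 : (0:ℝ) < F := by linarith
  obtain ⟨Kw, hKw1, hKwle⟩ : ∃ Kw, 1 ≤ Kw ∧ ∀ k n, Wt f k n ≤ Kw :=
    ⟨Real.exp (∑' j, max ((f j).mean - 1) 0),
      Real.one_le_exp (Sp_nonneg f), Wt_le_Kw f hpos hC1c⟩
  obtain ⟨M, hM1, hMS⟩ : ∃ M, 1 ≤ M ∧ ∀ n,
      ∑ k ∈ (Finset.Ioc 0 n).filter (fun k => (f k).mean < 1), Wt f k n * (1 - (f k).mean)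
        ≤ M := by
    refine ⟨1 + Real.exp (∑' j, max ((f j).mean - 1) 0) * (∑' j, max ((f j).mean - 1) 0),
      ?_, MS_bound f hpos hC1c⟩
    have h1 := mul_nonneg (Real.exp_pos (∑' j, max ((f j).mean - 1) 0)).le (Sp_nonneg f)
    linarith
  set D : ℝ := F * M + F * Kw * C + 1 with hDdef
  have hD1 : 1 ≤ D := by
    have h1 : (0:ℝ) ≤ F * M := mul_nonneg hF0.le (by linarith)
    have h2 : (0:ℝ) ≤ F * Kw * C := mul_nonneg (mul_nonneg hF0.le (by linarith)) hC0
    rw [hDdef]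
    linarith
  have hD0 : 0 < D := by linarith
  rw [Metric.tendsto_atTop]
  intro δ' hδ'
  set δ : ℝ := δ' / (2 * D) with hδdef
  have hδpos : 0 < δ := by positivity
  obtain ⟨K₁, hK₁⟩ := hsm δ hδpos
  obtain ⟨K₂, hK₂⟩ := tail_small (fun j => max ((f j).mean - 1) 0) hC1c
    (fun k => le_max_right _ _) hδpos
  set K := max K₁ K₂ with hKdef
  set DK := ∑ k ∈ Finset.Ioc 0 K, ((f k).mean / Pp f k) * |e k| with hDKdef
  have hP0 : Tendsto (fun n => Pp f n * DK) atTop (𝓝 0) := by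
    simpa using (Pp_tendsto_zero f hpos hC1b hC1c).mul_const DK
  have hev : ∀ᶠ n in atTop, Pp f n * DK < δ' / 2 :=
    hP0.eventually (eventually_lt_nhds (half_pos hδ'))
  obtain ⟨N₀, hN₀⟩ := hev.exists_forall_of_atTop
  refine ⟨max N₀ K, fun n hn => ?_⟩
  have hKn : K ≤ n := le_trans (le_max_right _ _) hn
  have hN0n : N₀ ≤ n := le_trans (le_max_left _ _) hn
  rw [Real.dist_eq, sub_zero]
  have hsplit := Finset.sum_Ioc_consecutive
    (fun k => ((f k).mean * Wt f k n) * e k) (Nat.zero_le K) hKn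
  have hhead : |∑ k ∈ Finset.Ioc 0 K, ((f k).mean * Wt f k n) * e k| ≤ Pp f n * DK := by
    refine (Finset.abs_sum_le_sum_abs _ _).trans ?_
    have heach : ∀ k ∈ Finset.Ioc 0 K, |((f k).mean * Wt f k n) * e k|
        = Pp f n * (((f k).mean / Pp f k) * |e k|) := by
      intro k hk
      have hkn : k ≤ n := le_trans (Finset.mem_Ioc.mp hk).2 hKn
      have hW : Wt f k n = Pp f n / Pp f k := by
        rw [eq_div_iff (Pp_pos f hpos k).ne', mul_comm]
        exact Pp_mul_Wt f hkn
      rw [abs_mul, hW, abs_of_pos (mul_pos (hpos k)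
        (div_pos (Pp_pos f hpos n) (Pp_pos f hpos k)))]
      ring
    rw [Finset.sum_congr rfl heach, ← Finset.mul_sum]
  have htail : |∑ k ∈ Finset.Ioc K n, ((f k).mean * Wt f k n) * e k|
      ≤ δ * (F * M) + F * Kw * C * δ := by
    refine (Finset.abs_sum_le_sum_abs _ _).trans ?_
    rw [← Finset.sum_filter_add_sum_filter_not (Finset.Ioc K n)
      (fun k => (f k).mean < 1) (fun k => |((f k).mean * Wt f k n) * e k|)]
    have hpart1 : ∑ k ∈ (Finset.Ioc K n).filter (fun k => (f k).mean < 1),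
        |((f k).mean * Wt f k n) * e k| ≤ δ * (F * M) := by
      have hstep : ∀ k ∈ (Finset.Ioc K n).filter (fun k => (f k).mean < 1),
          |((f k).mean * Wt f k n) * e k| ≤ (δ * F) * (Wt f k n * (1 - (f k).mean)) := by
        intro k hk
        obtain ⟨hk1, hk2⟩ := Finset.mem_filter.mp hk
        have hkK : K₁ ≤ k := le_trans (le_max_left _ _) (le_of_lt (Finset.mem_Ioc.mp hk1).1)
        have he := hK₁ k hkK hk2
        have hWpos := Wt_pos f hpos k n
        have hfpos := hpos k
        have hfF := hFub k
        rw [abs_mul, abs_of_pos (mul_pos hfpos hWpos)]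
        have h1 : (f k).mean * Wt f k n * |e k| ≤ (f k).mean * Wt f k n * (δ * (1 - (f k).mean)) :=
          mul_le_mul_of_nonneg_left he (by positivity)
        have h2 : (f k).mean * Wt f k n * (δ * (1 - (f k).mean))
            ≤ F * Wt f k n * (δ * (1 - (f k).mean)) := by
          have : 0 ≤ Wt f k n * (δ * (1 - (f k).mean)) := by
            have : (0:ℝ) ≤ 1 - (f k).mean := by linarith
            positivity
          nlinarith
        nlinarith
      calc ∑ k ∈ (Finset.Ioc K n).filter (fun k => (f k).mean < 1),
            |((f k).mean * Wt f k n) * e k|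
          ≤ ∑ k ∈ (Finset.Ioc K n).filter (fun k => (f k).mean < 1),
            (δ * F) * (Wt f k n * (1 - (f k).mean)) := Finset.sum_le_sum hstep
        _ = (δ * F) * ∑ k ∈ (Finset.Ioc K n).filter (fun k => (f k).mean < 1),
            (Wt f k n * (1 - (f k).mean)) := by rw [Finset.mul_sum]
        _ ≤ (δ * F) * ∑ k ∈ (Finset.Ioc 0 n).filter (fun k => (f k).mean < 1),
            (Wt f k n * (1 - (f k).mean)) := by
            refine mul_le_mul_of_nonneg_left ?_ (by positivity)
            refine Finset.sum_le_sum_of_subset_of_nonneg ?_ ?_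
            · refine Finset.filter_subset_filter _ (Finset.Ioc_subset_Ioc (Nat.zero_le K) le_rfl)
            · intro k hk _
              have hk2 : (f k).mean < 1 := (Finset.mem_filter.mp hk).2
              have := (Wt_pos f hpos k n).le
              nlinarith
        _ ≤ (δ * F) * M := by
            refine mul_le_mul_of_nonneg_left ?_ (by positivity)
            exact hMS n
        _ = δ * (F * M) := by ring
    have hpart2 : ∑ k ∈ (Finset.Ioc K n).filter (fun k => ¬ (f k).mean < 1),
        |((f k).mean * Wt f k n) * e k| ≤ F * Kw * C * δ := by
      have hstep : ∀ k ∈ (Finset.Ioc K n).filter (fun k => ¬ (f k).mean < 1),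
          |((f k).mean * Wt f k n) * e k| ≤ (F * Kw * C) * max ((f k).mean - 1) 0 := by
        intro k hk
        obtain ⟨hk1, hk2⟩ := Finset.mem_filter.mp hk
        push_neg at hk2
        have hgt : 1 < (f k).mean := lt_of_le_of_ne hk2 (Ne.symm (hne k))
        have hmax : max ((f k).mean - 1) 0 = (f k).mean - 1 := max_eq_left (by linarith)
        have habs : |1 - (f k).mean| = (f k).mean - 1 := by
          rw [abs_of_nonpos (by linarith)]; ring
        have he : |e k| ≤ C * ((f k).mean - 1) := by rw [← habs]; exact hbd k
        have hWpos := Wt_pos f hpos k n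
        have hWKw := hKwle k n
        have hfpos := hpos k
        have hfF := hFub k
        rw [abs_mul, abs_of_pos (mul_pos hfpos hWpos), hmax]
        have h1 : (f k).mean * Wt f k n ≤ F * Kw := by nlinarith
        have h2 : 0 ≤ (f k).mean * Wt f k n := by positivity
        nlinarith [abs_nonneg (e k), mul_le_mul h1 he (abs_nonneg (e k)) (by positivity)]
      calc ∑ k ∈ (Finset.Ioc K n).filter (fun k => ¬ (f k).mean < 1),
            |((f k).mean * Wt f k n) * e k|
          ≤ ∑ k ∈ (Finset.Ioc K n).filter (fun k => ¬ (f k).mean < 1),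
            (F * Kw * C) * max ((f k).mean - 1) 0 := Finset.sum_le_sum hstep
        _ = (F * Kw * C) * ∑ k ∈ (Finset.Ioc K n).filter (fun k => ¬ (f k).mean < 1),
            max ((f k).mean - 1) 0 := by rw [Finset.mul_sum]
        _ ≤ (F * Kw * C) * δ := by
            refine mul_le_mul_of_nonneg_left ?_ (by positivity)
            refine hK₂ _ fun k hk => ?_
            have hk1 := (Finset.mem_filter.mp hk).1
            exact le_trans (le_max_right K₁ K₂) (le_of_lt (Finset.mem_Ioc.mp hk1).1)
        _ = F * Kw * C * δ := by ring
    linarith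
  have habs : |∑ k ∈ Finset.Ioc 0 n, ((f k).mean * Wt f k n) * e k|
      ≤ Pp f n * DK + (δ * (F * M) + F * Kw * C * δ) := by
    rw [← hsplit]
    exact (abs_add_le _ _).trans (by linarith)
  have hd : δ * (F * M) + F * Kw * C * δ < δ' / 2 := by
    have h1 : δ * (F * M) + F * Kw * C * δ = δ * (D - 1) := by rw [hDdef]; ring
    rw [h1, hδdef]
    rw [div_mul_eq_mul_div, div_lt_iff₀ (by positivity)]
    nlinarith
  have := hN₀ n hN0n
  linarith

lemma conv (hpos : ∀ n, 0 < (f n).mean) (hne : ∀ n, (f n).mean ≠ 1)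
    (hC1a : Tendsto (fun n => (f n).mean) atTop (𝓝 1))
    (hC1b : ¬ Summable (fun n => max (1 - (f n).mean) 0))
    (hC1c : Summable (fun n => max ((f n).mean - 1) 0))
    (c : ℕ → ℝ) (C L : ℝ)
    (hbd : ∀ k, |c k| ≤ C * |1 - (f k).mean|)
    (hlim : Tendsto (fun k => c k / (1 - (f k).mean))
      (atTop ⊓ 𝓟 {k | (f k).mean < 1}) (𝓝 L)) :
    Tendsto (fun n => ∑ k ∈ Finset.Ioc 0 n, ((f k).mean * Wt f k n) * c k) atTop (𝓝 L) := by
  obtain ⟨μ, hμ0, hμ⟩ := mean_lb f hpos hC1a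
  set e : ℕ → ℝ := fun k => c k - L * ((1 - (f k).mean) / (f k).mean) with hedef
  have hbd' : ∀ k, |e k| ≤ (C + |L| / μ) * |1 - (f k).mean| := by
    intro k
    have h1 : |e k| ≤ |c k| + |L| * (|1 - (f k).mean| / (f k).mean) := by
      rw [hedef]
      refine (abs_sub _ _).trans ?_
      rw [abs_mul, abs_div, abs_of_pos (hpos k)]
    have h2 : |1 - (f k).mean| / (f k).mean ≤ |1 - (f k).mean| / μ :=
      div_le_div_of_nonneg_left (abs_nonneg _) hμ0 (hμ k)
    have h3 := hbd k
    have h4 : |L| * (|1 - (f k).mean| / (f k).mean) ≤ |L| * (|1 - (f k).mean| / μ) :=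
      mul_le_mul_of_nonneg_left h2 (abs_nonneg L)
    have h5 : |L| * (|1 - (f k).mean| / μ) = (|L| / μ) * |1 - (f k).mean| := by ring
    nlinarith
  have hsm : ∀ δ : ℝ, 0 < δ → ∃ K, ∀ k, K ≤ k → (f k).mean < 1
      → |e k| ≤ δ * (1 - (f k).mean) := by
    intro δ hδ
    have hq : Tendsto (fun k => L / (f k).mean) atTop (𝓝 L) := by
      have := (tendsto_const_nhds (x := L)).div hC1a one_ne_zero
      rw [div_one] at this
      exact this
    have hev1 : ∀ᶠ k in atTop, |L / (f k).mean - L| < δ / 2 := by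
      have := Metric.tendsto_atTop.mp hq (δ/2) (by linarith)
      obtain ⟨N, hN⟩ := this
      refine eventually_atTop.mpr ⟨N, fun k hk => ?_⟩
      have := hN k hk
      rwa [Real.dist_eq] at this
    have hbase : ∀ᶠ k in atTop ⊓ 𝓟 {k | (f k).mean < 1},
        |c k / (1 - (f k).mean) - L| < δ / 2 :=
      (Metric.tendsto_nhds.mp hlim (δ/2) (by linarith)).mono
        (fun k hk => by rwa [Real.dist_eq] at hk)
    have hev2 : ∀ᶠ k in atTop, k ∈ {k | (f k).mean < 1} →
        |c k / (1 - (f k).mean) - L| < δ / 2 := eventually_inf_principal.mp hbase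
    obtain ⟨K, hK⟩ := (hev1.and hev2).exists_forall_of_atTop
    refine ⟨K, fun k hk hlt => ?_⟩
    obtain ⟨h1, h2⟩ := hK k hk
    have h2' := h2 hlt
    have hne0 : (1 - (f k).mean) ≠ 0 := by
      have := hne k; intro hc; apply this; linarith [sub_eq_zero.mp hc]
    have hepos : 0 < 1 - (f k).mean := by linarith
    have heeq : e k = (c k / (1 - (f k).mean) - L / (f k).mean) * (1 - (f k).mean) := by
      rw [hedef]
      field_simp
    rw [heeq, abs_mul, abs_of_pos hepos]
    have : |c k / (1 - (f k).mean) - L / (f k).mean| ≤ δ := by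
      have := abs_sub_abs_le_abs_sub (c k / (1 - (f k).mean)) (L / (f k).mean)
      calc |c k / (1 - (f k).mean) - L / (f k).mean|
          ≤ |c k / (1 - (f k).mean) - L| + |L - L / (f k).mean| := by
            have := abs_sub_le (c k / (1 - (f k).mean)) L (L / (f k).mean)
            linarith
        _ ≤ δ := by
            rw [abs_sub_comm L (L / (f k).mean)] at *
            linarith
    exact mul_le_mul_of_nonneg_right this hepos.le
  have hvan := van f hpos hne hC1a hC1b hC1c e (C + |L| / μ) hbd' hsm
  have hPp := Pp_tendsto_zero f hpos hC1b hC1c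
  have hfinal : Tendsto (fun n => (∑ k ∈ Finset.Ioc 0 n, ((f k).mean * Wt f k n) * e k)
      + L * (1 - Pp f n)) atTop (𝓝 L) := by
    have h2 : Tendsto (fun n => L * (1 - Pp f n)) atTop (𝓝 L) := by
      have := ((tendsto_const_nhds (x := (1:ℝ))).sub hPp).const_mul L
      simpa using this
    have := hvan.add h2
    simpa using this
  refine hfinal.congr fun n => ?_
  have hcongr : ∀ k ∈ Finset.Ioc 0 n, ((f k).mean * Wt f k n) * e k
      + L * (Wt f k n * (1 - (f k).mean)) = ((f k).mean * Wt f k n) * c k := by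
    intro k _
    rw [hedef]
    have hne0 : (f k).mean ≠ 0 := (hpos k).ne'
    field_simp
    ring
  calc (∑ k ∈ Finset.Ioc 0 n, ((f k).mean * Wt f k n) * e k) + L * (1 - Pp f n)
      = (∑ k ∈ Finset.Ioc 0 n, ((f k).mean * Wt f k n) * e k)
        + L * ∑ k ∈ Finset.Ioc 0 n, Wt f k n * (1 - (f k).mean) := by
        rw [tele f hpos n]
    _ = ∑ k ∈ Finset.Ioc 0 n, (((f k).mean * Wt f k n) * e k
        + L * (Wt f k n * (1 - (f k).mean))) := by
        rw [Finset.mul_sum, ← Finset.sum_add_distrib]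
    _ = ∑ k ∈ Finset.Ioc 0 n, ((f k).mean * Wt f k n) * c k :=
        Finset.sum_congr rfl hcongr

end Limits

lemma Tlim (f : ℕ → PGF) (ν : ℝ) (hν : 0 ≤ ν)
    (hmean_sum : ∀ n, Summable (fun k : ℕ => (k : ℝ) * (f n).p k))
    (hm2_sum : ∀ n, Summable (fun k : ℕ => (k : ℝ) * ((k : ℝ) - 1) * (f n).p k))
    (hm3_sum : ∀ n, Summable (fun k : ℕ => (k : ℝ) * ((k : ℝ) - 1) * ((k : ℝ) - 2) * (f n).p k))
    (hpos : ∀ n, 0 < (f n).mean) (hne : ∀ n, (f n).mean ≠ 1)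
    (hC1a : Tendsto (fun n => (f n).mean) atTop (𝓝 1))
    (hC1b : ¬ Summable (fun n => max (1 - (f n).mean) 0))
    (hC1c : Summable (fun n => max ((f n).mean - 1) 0))
    (hC2a : Tendsto (fun n => (f n).m2 / (1 - (f n).mean))
      (atTop ⊓ 𝓟 {n | (f n).mean < 1}) (𝓝 ν))
    (hC2b : ∃ C, ∀ n, (f n).m2 / |1 - (f n).mean| ≤ C)
    (hC3a : 0 < ν → Tendsto (fun n => (f n).m3 / (1 - (f n).mean))
      (atTop ⊓ 𝓟 {n | (f n).mean < 1}) (𝓝 0))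
    (hC3b : 0 < ν → ∃ C, ∀ n, (f n).m3 / |1 - (f n).mean| ≤ C) :
    Tendsto (fun n => Pp f n / (1 - iterComp f 0 n 0)) atTop (𝓝 (1 + ν/2)) := by
  have habs_pos : ∀ k, 0 < |1 - (f k).mean| :=
    fun k => abs_pos.mpr (sub_ne_zero.mpr (Ne.symm (hne k)))
  obtain ⟨C₂, hC₂⟩ := hC2b
  have hC₂' : ∀ k, (f k).m2 ≤ C₂ * |1 - (f k).mean| := by
    intro k
    have h := hC₂ k
    rwa [div_le_iff₀ (habs_pos k)] at h
  have hC₂0 : 0 ≤ C₂ := by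
    have h := hC₂ 0
    have h2 := div_nonneg ((f 0).m2_nonneg) (habs_pos 0).le
    linarith
  have h1f : Tendsto (fun k => 1 - (f k).mean) atTop (𝓝 0) := by
    simpa using (tendsto_const_nhds (x := (1:ℝ))).sub hC1a
  have hm2to0 : Tendsto (fun k => (f k).m2) atTop (𝓝 0) := by
    refine squeeze_zero (fun k => (f k).m2_nonneg) hC₂' ?_
    have := (h1f.abs).const_mul C₂
    simpa using this
  obtain ⟨K₀, hK₀⟩ : ∃ K₀, ∀ k, K₀ ≤ k → (f k).m2 < 1/2 ∧ 1/2 < (f k).mean := by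
    have h1 : ∀ᶠ k in atTop, (f k).m2 < 1/2 :=
      hm2to0.eventually (eventually_lt_nhds (by norm_num))
    have h2 : ∀ᶠ k in atTop, 1/2 < (f k).mean :=
      hC1a.eventually (eventually_gt_nhds (by norm_num))
    exact (h1.and h2).exists_forall_of_atTop
  obtain ⟨μ, hμ0, hμ⟩ := mean_lb f hpos hC1a
  -- upper bound sequence
  set u : ℕ → ℝ := fun k => if K₀ ≤ k
    then ((f k).m2/2)/((f k).mean*((f k).mean - (f k).m2/2))
    else (f k).m2/(2*(1 - (f k).p 0)*(f k).mean) with hudef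
  have hu_nonneg : ∀ k, 0 ≤ u k := by
    intro k
    rw [hudef]
    dsimp only
    split
    · rename_i hk
      obtain ⟨h1, h2⟩ := hK₀ k hk
      have : (0:ℝ) < (f k).mean - (f k).m2/2 := by linarith
      exact div_nonneg (by linarith [(f k).m2_nonneg]) (by positivity)
    · have hp0 := (f k).p0_lt_one (hpos k)
      have := hpos k
      exact div_nonneg (f k).m2_nonneg (by nlinarith)
  have hu_phi : ∀ n, ∀ k, 0 < k → k ≤ n → phi (f k) (iterComp f k n 0) ≤ u k := by
    intro n k _ hkn
    obtain ⟨hr0, hr1⟩ := iter_lt_one f hpos k n hkn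
    rw [hudef]
    dsimp only
    split
    · rename_i hk
      obtain ⟨h1, h2⟩ := hK₀ k hk
      exact (f k).phi_le_sharp (hpos k) hr0 hr1 (hmean_sum k) (hm2_sum k) (by linarith)
    · exact (f k).phi_le_crude (hpos k) hr0 hr1 (hmean_sum k) (hm2_sum k)
  have hu_bd : ∃ Cu, ∀ k, |u k| ≤ Cu * |1 - (f k).mean| := by
    obtain ⟨C', hC'⟩ := exists_ub_fin (fun k => u k / |1 - (f k).mean|) K₀
    refine ⟨max (4*C₂) C', fun k => ?_⟩
    rw [abs_of_nonneg (hu_nonneg k)]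
    rcases le_or_gt K₀ k with hk | hk
    · obtain ⟨h1, h2⟩ := hK₀ k hk
      have hm2n := (f k).m2_nonneg
      have hd : (1:ℝ)/8 ≤ (f k).mean*((f k).mean - (f k).m2/2) := by nlinarith
      have hu1 : u k ≤ ((f k).m2/2)/(1/8) := by
        rw [hudef]
        simp only [hk, if_true]
        exact div_le_div_of_nonneg_left (by linarith) (by norm_num) hd
      have hu2 : ((f k).m2/2)/(1/8) = 4 * (f k).m2 := by field_simp; ring
      have hu3 : 4 * (f k).m2 ≤ 4*C₂ * |1 - (f k).mean| := by nlinarith [hC₂' k]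
      calc u k ≤ 4*C₂ * |1 - (f k).mean| := by rw [hu2] at hu1; linarith
        _ ≤ max (4*C₂) C' * |1 - (f k).mean| :=
            mul_le_mul_of_nonneg_right (le_max_left _ _) (abs_nonneg _)
    · have h := hC' k hk
      have h2 : u k ≤ C' * |1 - (f k).mean| := by
        rw [div_le_iff₀ (habs_pos k)] at h
        exact h
      calc u k ≤ C' * |1 - (f k).mean| := h2
        _ ≤ max (4*C₂) C' * |1 - (f k).mean| :=
            mul_le_mul_of_nonneg_right (le_max_right _ _) (abs_nonneg _)
  have hu_lim : Tendsto (fun k => u k / (1 - (f k).mean))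
      (atTop ⊓ 𝓟 {k | (f k).mean < 1}) (𝓝 (ν/2)) := by
    have hmean_l : Tendsto (fun k => (f k).mean) (atTop ⊓ 𝓟 {k | (f k).mean < 1}) (𝓝 1) :=
      hC1a.mono_left inf_le_left
    have hm2_l : Tendsto (fun k => (f k).m2) (atTop ⊓ 𝓟 {k | (f k).mean < 1}) (𝓝 0) :=
      hm2to0.mono_left inf_le_left
    have hden : Tendsto (fun k => ((f k).mean*((f k).mean - (f k).m2/2))⁻¹)
        (atTop ⊓ 𝓟 {k | (f k).mean < 1}) (𝓝 ((1*(1-0/2))⁻¹)) := by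
      exact (hmean_l.mul (hmean_l.sub (hm2_l.div_const 2))).inv₀ (by norm_num)
    have hmain : Tendsto (fun k => ((f k).m2/(1 - (f k).mean)/2)
        * ((f k).mean*((f k).mean - (f k).m2/2))⁻¹)
        (atTop ⊓ 𝓟 {k | (f k).mean < 1}) (𝓝 (ν/2 * (1*(1-0/2))⁻¹)) :=
      (hC2a.div_const 2).mul hden
    have heq : ∀ᶠ k in (atTop ⊓ 𝓟 {k | (f k).mean < 1}),
        ((f k).m2/(1 - (f k).mean)/2) * ((f k).mean*((f k).mean - (f k).m2/2))⁻¹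
          = u k / (1 - (f k).mean) := by
      have hev : ∀ᶠ k in atTop, K₀ ≤ k := eventually_ge_atTop K₀
      refine (hev.filter_mono inf_le_left).mono fun k hk => ?_
      rw [hudef]
      simp only [hk, if_true]
      ring
    have := hmain.congr' heq
    convert this using 2
    norm_num
  obtain ⟨Cu, hCu⟩ := hu_bd
  have hupper := conv f hpos hne hC1a hC1b hC1c u Cu (ν/2) hCu hu_lim
  -- lower bound sequence
  have hlow : ∃ (l : ℕ → ℝ), (∀ n k, 0 < k → k ≤ n → l k ≤ phi (f k) (iterComp f k n 0)) ∧
      Tendsto (fun n => ∑ k ∈ Finset.Ioc 0 n, ((f k).mean * Wt f k n) * l k)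
        atTop (𝓝 (ν/2)) := by
    by_cases hν0 : 0 < ν
    · obtain ⟨C₃, hC₃⟩ := hC3b hν0
      have hC₃' : ∀ k, (f k).m3 ≤ C₃ * |1 - (f k).mean| := by
        intro k
        have h := hC₃ k
        rwa [div_le_iff₀ (habs_pos k)] at h
      refine ⟨fun k => max (((f k).m2/2 - (f k).m3/6)/(f k).mean^2) 0, ?_, ?_⟩
      · intro n k _ hkn
        obtain ⟨hr0, hr1⟩ := iter_lt_one f hpos k n hkn
        exact max_le ((f k).phi_ge (hpos k) hr0 hr1 (hmean_sum k) (hm2_sum k) (hm3_sum k))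
          ((f k).phi_nonneg (hpos k) hr0 hr1 (hmean_sum k))
      · refine conv f hpos hne hC1a hC1b hC1c _ ((C₂/2 + C₃/6)/μ^2) (ν/2) ?_ ?_
        · intro k
          have hm2n := (f k).m2_nonneg
          have hm3n := (f k).m3_nonneg
          have hfk := hμ k
          have hf0 := hpos k
          have hsq : (0:ℝ) < (f k).mean^2 := pow_pos hf0 2
          have hμsq : (0:ℝ) < μ^2 := pow_pos hμ0 2
          have hnum0 : (0:ℝ) ≤ (f k).m2/2 + (f k).m3/6 := by linarith
          have hxabs : |((f k).m2/2 - (f k).m3/6)/(f k).mean^2|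
              ≤ ((f k).m2/2 + (f k).m3/6)/μ^2 := by
            rw [abs_div, abs_of_pos hsq]
            refine div_le_div₀ hnum0 ?_ hμsq (by nlinarith)
            refine (abs_sub _ _).trans ?_
            rw [abs_of_nonneg (by linarith), abs_of_nonneg (by linarith)]
          have hlk : |max (((f k).m2/2 - (f k).m3/6)/(f k).mean^2) 0|
              ≤ ((f k).m2/2 + (f k).m3/6)/μ^2 := by
            rw [abs_of_nonneg (le_max_right _ _)]
            exact max_le ((le_abs_self _).trans hxabs) (div_nonneg hnum0 hμsq.le)
          refine hlk.trans ?_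
          have hnum : (f k).m2/2 + (f k).m3/6 ≤ (C₂/2 + C₃/6) * |1 - (f k).mean| := by
            have := hC₂' k
            have := hC₃' k
            linarith
          calc ((f k).m2/2 + (f k).m3/6)/μ^2
              ≤ ((C₂/2 + C₃/6) * |1 - (f k).mean|)/μ^2 :=
                by gcongr
            _ = (C₂/2 + C₃/6)/μ^2 * |1 - (f k).mean| := by ring
        · have hmean_l : Tendsto (fun k => (f k).mean)
              (atTop ⊓ 𝓟 {k | (f k).mean < 1}) (𝓝 1) := hC1a.mono_left inf_le_left
          have hinner : Tendsto (fun k => ((f k).m2/(1 - (f k).mean)/2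
              - (f k).m3/(1 - (f k).mean)/6) * ((f k).mean^2)⁻¹)
              (atTop ⊓ 𝓟 {k | (f k).mean < 1}) (𝓝 ((ν/2 - 0/6) * (1^2)⁻¹)) :=
            ((hC2a.div_const 2).sub ((hC3a hν0).div_const 6)).mul
              ((hmean_l.pow 2).inv₀ (by norm_num))
          have hmax : Tendsto (fun k => max (((f k).m2/(1 - (f k).mean)/2
              - (f k).m3/(1 - (f k).mean)/6) * ((f k).mean^2)⁻¹) 0)
              (atTop ⊓ 𝓟 {k | (f k).mean < 1}) (𝓝 (max ((ν/2 - 0/6) * (1^2)⁻¹) 0)) :=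
            hinner.max tendsto_const_nhds
          have heq : ∀ᶠ k in (atTop ⊓ 𝓟 {k | (f k).mean < 1}),
              max (((f k).m2/(1 - (f k).mean)/2 - (f k).m3/(1 - (f k).mean)/6)
                * ((f k).mean^2)⁻¹) 0
              = max (((f k).m2/2 - (f k).m3/6)/(f k).mean^2) 0 / (1 - (f k).mean) := by
            rw [eventually_inf_principal]
            refine Eventually.of_forall fun k hk => ?_
            have hlt : (f k).mean < 1 := hk
            have hpos1 : (0:ℝ) < 1 - (f k).mean := by linarith
            rw [← max_div_div_right hpos1.le]
            congr 1
            · ring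
            · simp
          have hfin := hmax.congr' heq
          rw [show ((ν / 2 - 0 / 6) * ((1:ℝ) ^ 2)⁻¹ ⊔ 0) = ν/2 from by
            rw [show ((ν / 2 - 0 / 6) * ((1:ℝ) ^ 2)⁻¹) = ν/2 by norm_num]
            exact max_eq_left (by linarith)] at hfin
          exact hfin
    · refine ⟨fun _ => 0, ?_, ?_⟩
      · intro n k _ hkn
        obtain ⟨hr0, hr1⟩ := iter_lt_one f hpos k n hkn
        exact (f k).phi_nonneg (hpos k) hr0 hr1 (hmean_sum k)
      · have hν' : ν = 0 := le_antisymm (not_lt.mp hν0) hν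
        have : (fun n => ∑ k ∈ Finset.Ioc 0 n, ((f k).mean * Wt f k n) * (0:ℝ))
            = fun _ => (0:ℝ) := by
          funext n
          simp
        rw [this, hν']
        simpa using (tendsto_const_nhds : Tendsto (fun _ : ℕ => (0:ℝ)) atTop (𝓝 0))
  obtain ⟨l, hl_phi, hlower⟩ := hlow
  have hT : Tendsto (fun n => ∑ k ∈ Finset.Ioc 0 n,
      ((f k).mean * Wt f k n) * phi (f k) (iterComp f k n 0)) atTop (𝓝 (ν/2)) := by
    refine tendsto_of_tendsto_of_tendsto_of_le_of_le' hlower hupper ?_ ?_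
    · refine Eventually.of_forall fun n => ?_
      refine Finset.sum_le_sum fun k hk => ?_
      obtain ⟨hk0, hkn⟩ := Finset.mem_Ioc.mp hk
      exact mul_le_mul_of_nonneg_left (hl_phi n k hk0 hkn)
        (mul_pos (hpos k) (Wt_pos f hpos k n)).le
    · refine Eventually.of_forall fun n => ?_
      refine Finset.sum_le_sum fun k hk => ?_
      obtain ⟨hk0, hkn⟩ := Finset.mem_Ioc.mp hk
      exact mul_le_mul_of_nonneg_left (hu_phi n k hk0 hkn)
        (mul_pos (hpos k) (Wt_pos f hpos k n)).le
  have hfinal := (tendsto_const_nhds (x := (1:ℝ))).add hT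
  refine hfinal.congr fun n => ?_
  exact (iter_identity f hpos n 0 n (by omega)).symm

theorem stmt14 (f : ℕ → PGF) (ν : ℝ) (hν : 0 ≤ ν)
    (hmean_sum : ∀ n, Summable (fun k : ℕ => (k : ℝ) * (f n).p k))
    (hm2_sum : ∀ n, Summable (fun k : ℕ => (k : ℝ) * ((k : ℝ) - 1) * (f n).p k))
    (hm3_sum : ∀ n, Summable (fun k : ℕ => (k : ℝ) * ((k : ℝ) - 1) * ((k : ℝ) - 2) * (f n).p k))
    (hmean_pos : ∀ n, 0 < (f n).mean) (hmean_ne : ∀ n, (f n).mean ≠ 1)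
    (hC1a : Tendsto (fun n => (f n).mean) atTop (nhds 1))
    (hC1b : ¬ Summable (fun n => max (1 - (f n).mean) 0))
    (hC1c : Summable (fun n => max ((f n).mean - 1) 0))
    (hC2a : Tendsto (fun n => (f n).m2 / (1 - (f n).mean))
      (atTop ⊓ 𝓟 {n | (f n).mean < 1}) (nhds ν))
    (hC2b : ∃ C, ∀ n, (f n).m2 / |1 - (f n).mean| ≤ C)
    (hC3a : 0 < ν → Tendsto (fun n => (f n).m3 / (1 - (f n).mean))
      (atTop ⊓ 𝓟 {n | (f n).mean < 1}) (nhds 0))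
    (hC3b : 0 < ν → ∃ C, ∀ n, (f n).m3 / |1 - (f n).mean| ≤ C)
    (A : ℕ → ℕ) (hA : Monotone A) (hAtop : Tendsto A atTop atTop)
    (hAn : Tendsto (fun n : ℕ => (n : ℝ) * ∏ j ∈ Finset.Icc 1 (A n), (f j).mean) atTop (nhds 1))
    (ε m : ℝ) (hε : 0 < ε) (hεm : ε ≤ m) :
    Tendsto (fun n : ℕ =>
        (∏ j ∈ Finset.Icc 1 (A ⌊(n : ℝ) * m⌋₊), (f j).mean)
          / (1 - iterComp f 0 (A ⌊(n : ℝ) * ε⌋₊) 0))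
      atTop (nhds ((2 + ν) / 2 * (ε / m))) := by
  have hm0 : (0:ℝ) < m := lt_of_lt_of_le hε hεm
  have hIcc : ∀ N : ℕ, Finset.Icc 1 N = Finset.Ioc 0 N := by
    intro N
    ext x
    simp only [Finset.mem_Icc, Finset.mem_Ioc]
    omega
  have hAn' : Tendsto (fun n : ℕ => (n : ℝ) * Pp f (A n)) atTop (𝓝 1) := by
    refine hAn.congr fun n => ?_
    rw [Pp, hIcc]
  have hfm : Tendsto (fun n : ℕ => (n:ℝ) * m) atTop atTop :=
    tendsto_natCast_atTop_atTop.atTop_mul_const hm0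
  have hfε : Tendsto (fun n : ℕ => (n:ℝ) * ε) atTop atTop :=
    tendsto_natCast_atTop_atTop.atTop_mul_const hε
  have hflm : Tendsto (fun n : ℕ => ⌊(n:ℝ) * m⌋₊) atTop atTop :=
    tendsto_nat_floor_atTop.comp hfm
  have hflε : Tendsto (fun n : ℕ => ⌊(n:ℝ) * ε⌋₊) atTop atTop :=
    tendsto_nat_floor_atTop.comp hfε
  have hXm := hAn'.comp hflm
  have hYε := hAn'.comp hflε
  have hfracm : Tendsto ((fun x : ℝ => ((⌊x⌋₊ : ℕ):ℝ) / x) ∘ (fun n : ℕ => (n:ℝ) * m))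
      atTop (𝓝 1) := tendsto_nat_floor_div_atTop.comp hfm
  have hfracε : Tendsto ((fun x : ℝ => ((⌊x⌋₊ : ℕ):ℝ) / x) ∘ (fun n : ℕ => (n:ℝ) * ε))
      atTop (𝓝 1) := tendsto_nat_floor_div_atTop.comp hfε
  have hG := Tlim f ν hν hmean_sum hm2_sum hm3_sum hmean_pos hmean_ne hC1a hC1b hC1c
    hC2a hC2b hC3a hC3b
  have hGε := hG.comp (hAtop.comp hflε)
  have hcomb := ((hXm.div hYε one_ne_zero).mul
    ((hfracε.mul (hfracm.inv₀ one_ne_zero)).mul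
      (tendsto_const_nhds (x := ε/m)))).mul hGε
  have hcomb' : Tendsto (fun n : ℕ =>
      ((((⌊(n:ℝ)*m⌋₊:ℕ):ℝ) * Pp f (A ⌊(n:ℝ)*m⌋₊))
          / (((⌊(n:ℝ)*ε⌋₊:ℕ):ℝ) * Pp f (A ⌊(n:ℝ)*ε⌋₊))
        * ((((⌊(n:ℝ)*ε⌋₊:ℕ):ℝ) / ((n:ℝ)*ε)) * ((((⌊(n:ℝ)*m⌋₊:ℕ):ℝ) / ((n:ℝ)*m)))⁻¹ * (ε/m)))
        * (Pp f (A ⌊(n:ℝ)*ε⌋₊) / (1 - iterComp f 0 (A ⌊(n:ℝ)*ε⌋₊) 0)))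
      atTop (𝓝 ((2 + ν) / 2 * (ε / m))) := by
    have hval : (1:ℝ)/1 * (1 * (1:ℝ)⁻¹ * (ε/m)) * (1 + ν/2) = (2 + ν) / 2 * (ε / m) := by
      norm_num
      ring
    rw [← hval]
    exact hcomb
  refine Tendsto.congr' ?_ hcomb'
  have hev1 : ∀ᶠ n : ℕ in atTop, 1 ≤ ⌊(n:ℝ)*ε⌋₊ := hflε.eventually_ge_atTop 1
  have hev2 : ∀ᶠ n : ℕ in atTop, 1 ≤ ⌊(n:ℝ)*m⌋₊ := hflm.eventually_ge_atTop 1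
  have hev3 : ∀ᶠ n : ℕ in atTop, 1 ≤ n := eventually_ge_atTop 1
  filter_upwards [hev1, hev2, hev3] with n h1 h2 h3
  have ha0 : (0:ℝ) < ((⌊(n:ℝ)*ε⌋₊:ℕ):ℝ) := by exact_mod_cast Nat.lt_of_lt_of_le Nat.zero_lt_one h1
  have hb0 : (0:ℝ) < ((⌊(n:ℝ)*m⌋₊:ℕ):ℝ) := by exact_mod_cast Nat.lt_of_lt_of_le Nat.zero_lt_one h2
  have hn0 : (0:ℝ) < (n:ℝ) := by exact_mod_cast Nat.lt_of_lt_of_le Nat.zero_lt_one h3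
  have hPε : (0:ℝ) < Pp f (A ⌊(n:ℝ)*ε⌋₊) := Pp_pos f hmean_pos _
  have hq : (0:ℝ) < 1 - iterComp f 0 (A ⌊(n:ℝ)*ε⌋₊) 0 := by
    have := (iter_lt_one f hmean_pos 0 (A ⌊(n:ℝ)*ε⌋₊) (Nat.zero_le _)).2
    linarith
  rw [hIcc]
  show _ = Pp f (A ⌊(n:ℝ)*m⌋₊) / (1 - iterComp f 0 (A ⌊(n:ℝ)*ε⌋₊) 0)
  field_simp
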